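/- arXiv:2102.04707 — 2 statements merged into one kernel-verified Lean document; each statement's English description precedes it below -/
import Mathlib

section
/- The destroy-neighborhood is a true destroy neighborhood: for all integers i,d,k, every incidence graph G in 𝒞_d, every (i,d,k)-obstruction-tree T of G, and every variable x of G with x ∉ N†_G(T), T remains an (i,d,k)-obstruction-tree in at least one of G[x_+] and G[x_−]. -/
/-- Variables are natural numbers. -/
abbrev Var := ℕ

/-- A CNF formula: a finite set of clause identifiers, each identifier `i`
carrying the set of variables occurring positively (`pos i`) and negatively (`neg i`). -/
structure CNF where
  ids : Finset ℕ
  pos : ℕ → Finset Var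
  neg : ℕ → Finset Var

namespace CNF

/-- The variables of clause `i`. -/
def cvars (φ : CNF) (i : ℕ) : Finset Var := φ.pos i ∪ φ.neg i

/-- The variables of the formula. -/
def vars (φ : CNF) : Finset Var := φ.ids.biUnion φ.cvars

/-- The length of the formula: the sum of clause widths. -/
def len (φ : CNF) : ℕ := ∑ i ∈ φ.ids, (φ.cvars i).card

/-- `φ ∈ 𝒞_d`: every clause has at most `d` variables. -/
def InC (φ : CNF) (d : ℕ) : Prop := ∀ i ∈ φ.ids, (φ.cvars i).card ≤ d

/-- Assigning variable `x` to Boolean value `b`: clauses satisfied by the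
assignment are removed, and `x` is removed from the remaining clauses. -/
def assign (φ : CNF) (x : Var) (b : Bool) : CNF where
  ids := φ.ids.filter fun i => x ∉ (if b then φ.pos i else φ.neg i)
  pos := fun i => (φ.pos i).erase x
  neg := fun i => (φ.neg i).erase x

/-- Assigning all variables of a set `D` according to `τ`. -/
def assignSet (φ : CNF) (D : Finset Var) (τ : Var → Bool) : CNF where
  ids := φ.ids.filter fun i => ¬ ∃ x ∈ D, if τ x then x ∈ φ.pos i else x ∈ φ.neg i
  pos := fun i => φ.pos i \ D
  neg := fun i => φ.neg i \ D

/-- `τ` satisfies every clause of `φ`. -/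
def satBy (φ : CNF) (τ : Var → Bool) : Prop :=
  ∀ i ∈ φ.ids, (∃ x ∈ φ.pos i, τ x = true) ∨ (∃ x ∈ φ.neg i, τ x = false)

/-- `φ` is satisfiable. -/
def sat (φ : CNF) : Prop := ∃ τ, φ.satBy τ

/-- The number of satisfying assignments of `φ` over its variables
(assignments are normalized to be `false` outside `vars φ`). -/
noncomputable def count (φ : CNF) : ℕ :=
  Nat.card {τ : Var → Bool // φ.satBy τ ∧ ∀ x ∉ φ.vars, τ x = false}

/-- The incidence graph of `φ`: variable vertices `Sum.inl x` and clause
vertices `Sum.inr i`, adjacent iff `x` occurs in clause `i` of `φ`. -/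
def incGraph (φ : CNF) : SimpleGraph (Var ⊕ ℕ) where
  Adj u v := match u, v with
    | Sum.inl x, Sum.inr i => i ∈ φ.ids ∧ x ∈ φ.cvars i
    | Sum.inr i, Sum.inl x => i ∈ φ.ids ∧ x ∈ φ.cvars i
    | _, _ => False
  symm := ⟨by rintro (x | i) (y | j) h <;> exact h⟩
  loopless := ⟨by rintro (x | i) h <;> exact h⟩

/-- The vertices of the incidence graph that belong to `φ`. -/
def vertexSet (φ : CNF) : Set (Var ⊕ ℕ) :=
  {v | match v with | Sum.inl x => x ∈ φ.vars | Sum.inr i => i ∈ φ.ids}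

/-- The incidence graph of `φ` is connected. -/
def Conn (φ : CNF) : Prop :=
  ∀ u ∈ φ.vertexSet, ∀ v ∈ φ.vertexSet, (incGraph φ).Reachable u v

/-- The connected component (as a subformula) of clause `i` of `φ`. -/
noncomputable def componentOf (φ : CNF) (i : ℕ) : CNF := by
  classical
  exact { ids := φ.ids.filter fun j => (incGraph φ).Reachable (Sum.inr i) (Sum.inr j),
          pos := φ.pos, neg := φ.neg }

/-- The connected components of `φ`, as subformulas. -/
noncomputable def components (φ : CNF) : Finset CNF := by
  classical
  exact φ.ids.image φ.componentOf

/-- `ψ` is a connected component of `φ`. -/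
def IsComponent (φ ψ : CNF) : Prop := ψ ∈ φ.components

end CNF

/-- `SrbdLE φ k`: the strong recursive backdoor depth of `φ` to `𝒞₀` is at most `k`.
Either `φ` is edgeless, or we may assign one variable both ways at cost one,
or we may split into connected components for free. -/
inductive SrbdLE : CNF → ℕ → Prop where
| base (φ : CNF) (k : ℕ) : φ.vars = ∅ → SrbdLE φ k
| assign (φ : CNF) (k : ℕ) (x : Var) : x ∈ φ.vars →
    SrbdLE (φ.assign x true) k → SrbdLE (φ.assign x false) k → SrbdLE φ (k+1)
| split (φ : CNF) (k : ℕ) : (∀ ψ ∈ φ.components, SrbdLE ψ k) → SrbdLE φ k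

/-- `WrbdLE φ k`: the weak recursive backdoor depth of `φ` to `𝒞₀` is at most `k`. -/
inductive WrbdLE : CNF → ℕ → Prop where
| base (φ : CNF) (k : ℕ) : φ.vars = ∅ → φ.sat → WrbdLE φ k
| assign (φ : CNF) (k : ℕ) (x : Var) (b : Bool) : x ∈ φ.vars →
    WrbdLE (φ.assign x b) k → WrbdLE φ (k+1)
| split (φ : CNF) (k : ℕ) : (∀ ψ ∈ φ.components, WrbdLE ψ k) → WrbdLE φ k

/-- A strong recursive backdoor tree of `φ` to the class `C`:
leaves are formulas in `C`; a variable node branches on both assignments of a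
variable of `φ`; a component node has one child per connected component. -/
inductive SRB (C : Set CNF) : CNF → Type where
| leaf : (φ : CNF) → φ ∈ C → SRB C φ
| varNode : (φ : CNF) → (x : Var) → x ∈ φ.vars →
    SRB C (φ.assign x true) → SRB C (φ.assign x false) → SRB C φ
| compNode : (φ : CNF) → ((ψ : CNF) → ψ ∈ φ.components → SRB C ψ) → SRB C φ

namespace SRB

variable {C : Set CNF}

/-- The depth of a strong recursive backdoor: the maximal number of variable
nodes on a root-to-leaf path. -/
noncomputable def depth : {φ : CNF} → SRB C φ → ℕ
| _, .leaf _ _ => 0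
| _, .varNode _ _ _ l r => 1 + max (depth l) (depth r)
| _, .compNode φ f => φ.components.attach.sup fun ψ => depth (f ψ.1 ψ.2)

/-- The number of leaf nodes of a strong recursive backdoor. -/
noncomputable def leaves : {φ : CNF} → SRB C φ → ℕ
| _, .leaf _ _ => 1
| _, .varNode _ _ _ l r => leaves l + leaves r
| _, .compNode φ f => ∑ ψ ∈ φ.components.attach, leaves (f ψ.1 ψ.2)

/-- Bottom-up satisfiability evaluation of a strong recursive backdoor:
a leaf evaluates to the satisfiability of its formula, a variable node to the
disjunction of its children, a component node to the conjunction of its children. -/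
def eval : {φ : CNF} → SRB C φ → Prop
| _, .leaf φ _ => φ.sat
| _, .varNode _ _ _ l r => eval l ∨ eval r
| _, .compNode φ f => ∀ (ψ : CNF) (h : ψ ∈ φ.components), eval (f ψ h)

/-- Bottom-up model counting: a leaf contributes its model count, a variable
node the sum over both polarities (corrected by factors `2^e` for variables
disappearing from all clauses), a component node the product over components. -/
noncomputable def countEval : {φ : CNF} → SRB C φ → ℕ
| _, .leaf φ _ => φ.count
| _, .varNode φ x _ l r =>
    2 ^ (((φ.vars.erase x) \ (φ.assign x true).vars).card) * countEval l
  + 2 ^ (((φ.vars.erase x) \ (φ.assign x false).vars).card) * countEval r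
| _, .compNode φ f => ∏ ψ ∈ φ.components.attach, countEval (f ψ.1 ψ.2)

end SRB

/-- The underlying data of an obstruction-tree: a base clause, or two
obstruction-trees joined by a path (a list of incidence-graph vertices). -/
inductive ObsTree : Type where
| base : ℕ → ObsTree
| node : ObsTree → ObsTree → List (Var ⊕ ℕ) → ObsTree

namespace ObsTree

/-- The elements `V(T)` of an obstruction-tree, relative to formula `φ`. -/
def elts (φ : CNF) : ObsTree → Finset (Var ⊕ ℕ)
| .base i => insert (Sum.inr i) ((φ.cvars i).image Sum.inl)
| .node T₁ T₂ P => elts φ T₁ ∪ elts φ T₂ ∪ P.toFinset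

/-- The variables `var(T)` among the elements of `T`. -/
def varSet (φ : CNF) (T : ObsTree) : Finset Var :=
  (T.elts φ).biUnion fun v => match v with | Sum.inl x => {x} | Sum.inr _ => ∅

/-- The clauses `cla(T)` among the elements of `T`. -/
def claSet (φ : CNF) (T : ObsTree) : Finset ℕ :=
  (T.elts φ).biUnion fun v => match v with | Sum.inl _ => ∅ | Sum.inr i => {i}

/-- The destroy-neighborhood `N†_φ(T)`. -/
def nd (φ : CNF) : ObsTree → Finset Var
| .base i => φ.cvars i
| .node T₁ T₂ P =>
    (ObsTree.node T₁ T₂ P).varSet φ ∪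
    (((ObsTree.node T₁ T₂ P).claSet φ).biUnion φ.pos ∩
      ((ObsTree.node T₁ T₂ P).claSet φ).biUnion φ.neg)

end ObsTree

/-- `IsObsTree φ d k i T`: `T` is an `(i,d,k)`-obstruction-tree of `φ`.
A clause of width exactly `d` (with its variables) is a `(d,d,k)`-obstruction-tree;
two `(i,d,k)`-obstruction-trees with disjoint destroy-neighborhoods joined by a
path of length at most `λ_k = 4·2^k` form an `(i+1,d,k)`-obstruction-tree. -/
inductive IsObsTree (φ : CNF) (d k : ℕ) : ℕ → ObsTree → Prop where
| base (i : ℕ) : i ∈ φ.ids → (φ.cvars i).card = d → IsObsTree φ d k d (.base i)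
| node (i : ℕ) (T₁ T₂ : ObsTree) (P : List (Var ⊕ ℕ)) :
    IsObsTree φ d k i T₁ → IsObsTree φ d k i T₂ →
    Disjoint (T₁.nd φ) (T₂.nd φ) →
    P.Chain' (CNF.incGraph φ).Adj → P.Nodup →
    (hne : P ≠ []) →
    P.head hne ∈ T₁.elts φ → P.getLast hne ∈ T₂.elts φ →
    P.length ≤ 4 * 2 ^ k + 1 →
    IsObsTree φ d k (i+1) (.node T₁ T₂ P)


section Aux
open ObsTree

lemma mem_varSet_iff (φ : CNF) (T : ObsTree) (x : Var) :
    x ∈ T.varSet φ ↔ Sum.inl x ∈ T.elts φ := by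
  simp only [ObsTree.varSet, Finset.mem_biUnion]
  constructor
  · rintro ⟨v, hv, hx⟩
    cases v with
    | inl y => simp only [Finset.mem_singleton] at hx; subst hx; exact hv
    | inr j => simp at hx
  · intro h; exact ⟨Sum.inl x, h, by simp⟩

lemma mem_claSet_iff (φ : CNF) (T : ObsTree) (j : ℕ) :
    j ∈ T.claSet φ ↔ Sum.inr j ∈ T.elts φ := by
  simp only [ObsTree.claSet, Finset.mem_biUnion]
  constructor
  · rintro ⟨v, hv, hx⟩
    cases v with
    | inl y => simp at hx
    | inr m => simp only [Finset.mem_singleton] at hx; subst hx; exact hv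
  · intro h; exact ⟨Sum.inr j, h, by simp⟩

lemma cvars_assign_of_not_mem (φ : CNF) (x : Var) (b : Bool) (j : ℕ)
    (h : x ∉ φ.cvars j) : (φ.assign x b).cvars j = φ.cvars j := by
  have hp : x ∉ φ.pos j := fun hx => h (Finset.mem_union_left _ hx)
  have hn : x ∉ φ.neg j := fun hx => h (Finset.mem_union_right _ hx)
  simp [CNF.cvars, CNF.assign, Finset.erase_eq_of_notMem hp,
    Finset.erase_eq_of_notMem hn]

lemma mem_cvars_assign (φ : CNF) (x y : Var) (b : Bool) (j : ℕ)
    (hy : y ∈ φ.cvars j) (hne : y ≠ x) : y ∈ (φ.assign x b).cvars j := by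
  simp only [CNF.cvars, CNF.assign, Finset.mem_union, Finset.mem_erase] at *
  tauto

lemma elts_assign (φ : CNF) (x : Var) (b : Bool) :
    ∀ (T : ObsTree), Sum.inl x ∉ T.elts φ → T.elts (φ.assign x b) = T.elts φ
  | .base i, h => by
    have hx : x ∉ φ.cvars i := by
      intro hx
      exact h (by simp [ObsTree.elts, hx])
    simp [ObsTree.elts, cvars_assign_of_not_mem φ x b i hx]
  | .node T₁ T₂ P, h => by
    simp only [ObsTree.elts, Finset.mem_union, not_or] at h
    simp [ObsTree.elts, elts_assign φ x b T₁ h.1.1, elts_assign φ x b T₂ h.1.2]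

lemma nd_assign_subset (φ : CNF) (x : Var) (b : Bool) :
    ∀ (T : ObsTree), Sum.inl x ∉ T.elts φ → T.nd (φ.assign x b) ⊆ T.nd φ
  | .base i, _ => by
    simp only [ObsTree.nd, CNF.cvars, CNF.assign]
    exact Finset.union_subset_union (Finset.erase_subset _ _) (Finset.erase_subset _ _)
  | .node T₁ T₂ P, h => by
    simp only [ObsTree.nd]
    have he : ObsTree.elts (φ.assign x b) (.node T₁ T₂ P) = ObsTree.elts φ (.node T₁ T₂ P) :=
      elts_assign φ x b _ h
    have hv : ObsTree.varSet (φ.assign x b) (.node T₁ T₂ P) = ObsTree.varSet φ (.node T₁ T₂ P) := by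
      simp [ObsTree.varSet, he]
    have hc : ObsTree.claSet (φ.assign x b) (.node T₁ T₂ P) = ObsTree.claSet φ (.node T₁ T₂ P) := by
      simp [ObsTree.claSet, he]
    rw [hv, hc]
    refine Finset.union_subset_union le_rfl (Finset.inter_subset_inter ?_ ?_)
    · exact Finset.biUnion_mono fun j _ => by
        simpa [CNF.assign] using Finset.erase_subset x (φ.pos j)
    · exact Finset.biUnion_mono fun j _ => by
        simpa [CNF.assign] using Finset.erase_subset x (φ.neg j)

lemma chain'_of_mem {α : Type*} {R S : α → α → Prop} :
    ∀ {l : List α}, (∀ a ∈ l, ∀ b ∈ l, R a b → S a b) → l.Chain' R → l.Chain' S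
  | [], _, _ => List.isChain_nil
  | [_], _, _ => List.isChain_singleton _
  | a :: c :: l, h, hc => by
    unfold List.Chain' at hc ⊢
    rw [List.isChain_cons_cons] at hc ⊢
    exact ⟨h a (by simp) c (by simp) hc.1,
      chain'_of_mem (fun u hu v hv => h u (List.mem_cons_of_mem _ hu)
        v (List.mem_cons_of_mem _ hv)) hc.2⟩

lemma key_lemma (φ : CNF) (d k : ℕ) (x : Var) (b : Bool) :
    ∀ {i : ℕ} {T : ObsTree}, IsObsTree φ d k i T →
    (∀ j ∈ T.claSet φ, x ∉ (if b then φ.pos j else φ.neg j)) →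
    Sum.inl x ∉ T.elts φ →
    IsObsTree (φ.assign x b) d k i T := by
  intro i T hT
  induction hT with
  | base j hj hcard =>
    intro H1 H2
    have hx : x ∉ φ.cvars j := by
      intro hx; exact H2 (by simp [ObsTree.elts, hx])
    have hj' : j ∈ (φ.assign x b).ids := by
      simp only [CNF.assign, Finset.mem_filter]
      exact ⟨hj, H1 j ((mem_claSet_iff φ _ j).2 (by simp [ObsTree.elts]))⟩
    exact IsObsTree.base j hj' (by rw [cvars_assign_of_not_mem φ x b j hx]; exact hcard)
  | node m T₁ T₂ P h₁ h₂ hdisj hchain hnodup hne hhead hlast hlen IH₁ IH₂ =>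
    intro H1 H2
    have hsub₁ : T₁.elts φ ⊆ ObsTree.elts φ (.node T₁ T₂ P) := by
      intro v hv; simp [ObsTree.elts, hv]
    have hsub₂ : T₂.elts φ ⊆ ObsTree.elts φ (.node T₁ T₂ P) := by
      intro v hv; simp [ObsTree.elts, hv]
    have hsubP : ∀ v ∈ P, v ∈ ObsTree.elts φ (.node T₁ T₂ P) := by
      intro v hv; simp [ObsTree.elts, hv]
    have claSub : ∀ (T' : ObsTree), T'.elts φ ⊆ ObsTree.elts φ (.node T₁ T₂ P) →
        ∀ j ∈ T'.claSet φ, x ∉ (if b then φ.pos j else φ.neg j) := by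
      intro T' hs j hj
      exact H1 j ((mem_claSet_iff φ _ j).2 (hs ((mem_claSet_iff φ T' j).1 hj)))
    have H2₁ : Sum.inl x ∉ T₁.elts φ := fun h => H2 (hsub₁ h)
    have H2₂ : Sum.inl x ∉ T₂.elts φ := fun h => H2 (hsub₂ h)
    have adj : ∀ u ∈ P, ∀ v ∈ P, (CNF.incGraph φ).Adj u v →
        (CNF.incGraph (φ.assign x b)).Adj u v := by
      intro u hu v hv huv
      have survive : ∀ j : ℕ, Sum.inr j ∈ ObsTree.elts φ (.node T₁ T₂ P) →
          j ∈ φ.ids → j ∈ (φ.assign x b).ids := by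
        intro j hj hj'
        simp only [CNF.assign, Finset.mem_filter]
        exact ⟨hj', H1 j ((mem_claSet_iff φ _ j).2 hj)⟩
      have varok : ∀ y : Var, Sum.inl y ∈ ObsTree.elts φ (.node T₁ T₂ P) → y ≠ x := by
        intro y hy hyx; subst hyx; exact H2 hy
      match u, v with
      | Sum.inl y, Sum.inr j =>
        obtain ⟨hj, hy⟩ := huv
        exact ⟨survive j (hsubP _ hv) hj, mem_cvars_assign φ x y b j hy (varok y (hsubP _ hu))⟩
      | Sum.inr j, Sum.inl y =>
        obtain ⟨hj, hy⟩ := huv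
        exact ⟨survive j (hsubP _ hu) hj, mem_cvars_assign φ x y b j hy (varok y (hsubP _ hv))⟩
      | Sum.inl _, Sum.inl _ => exact huv.elim
      | Sum.inr _, Sum.inr _ => exact huv.elim
    refine IsObsTree.node m T₁ T₂ P
      (IH₁ (claSub T₁ hsub₁) H2₁) (IH₂ (claSub T₂ hsub₂) H2₂)
      (hdisj.mono (nd_assign_subset φ x b T₁ H2₁) (nd_assign_subset φ x b T₂ H2₂))
      (chain'_of_mem adj hchain) hnodup hne ?_ ?_ hlen
    · rw [elts_assign φ x b T₁ H2₁]; exact hhead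
    · rw [elts_assign φ x b T₂ H2₂]; exact hlast

end Aux

/-- the destroy-neighborhood is a destroy neighborhood:
for every variable `x ∉ N†_φ(T)`, `T` remains an `(i,d,k)`-obstruction-tree in
at least one of `φ[x := true]` and `φ[x := false]`. -/
theorem nd_is_destroy_neighborhood (i d k : ℕ) (φ : CNF) (hφ : φ.InC d)
    (T : ObsTree) (hT : IsObsTree φ d k i T) (x : Var)
    (hx : x ∈ φ.vars) (hnd : x ∉ T.nd φ) :
    IsObsTree (φ.assign x true) d k i T ∨ IsObsTree (φ.assign x false) d k i T := by
  classical
  have hvx : Sum.inl x ∉ T.elts φ := by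
    cases hT with
    | base j hj hcard =>
      intro h
      apply hnd
      simp only [ObsTree.elts, Finset.mem_insert, Finset.mem_image] at h
      rcases h with h | ⟨y, hy, hxy⟩
      · exact absurd h (by simp)
      · cases hxy; exact hy
    | node m T₁ T₂ P h₁ h₂ hdisj hchain hnodup hne hhead hlast hlen =>
      intro h
      exact hnd (Finset.mem_union_left _ ((mem_varSet_iff φ _ x).2 h))
  have hb : (∀ j ∈ T.claSet φ, x ∉ φ.pos j) ∨ (∀ j ∈ T.claSet φ, x ∉ φ.neg j) := by
    cases hT with
    | base j hj hcard =>
      left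
      intro m hm
      rw [mem_claSet_iff] at hm
      simp only [ObsTree.elts, Finset.mem_insert, Finset.mem_image] at hm
      rcases hm with hm | ⟨y, _, hxy⟩
      · obtain rfl : m = j := by injection hm
        intro hx'
        exact hnd (Finset.mem_union_left _ hx')
      · exact absurd hxy (by simp)
    | node m T₁ T₂ P h₁ h₂ hdisj hchain hnodup hne hhead hlast hlen =>
      have h2 : x ∉ ((ObsTree.node T₁ T₂ P).claSet φ).biUnion φ.pos ∩
          ((ObsTree.node T₁ T₂ P).claSet φ).biUnion φ.neg :=
        fun h => hnd (Finset.mem_union_right _ h)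
      rw [Finset.mem_inter, not_and_or] at h2
      rcases h2 with h2 | h2
      · left; intro j hj hx'
        exact h2 (Finset.mem_biUnion.2 ⟨j, hj, hx'⟩)
      · right; intro j hj hx'
        exact h2 (Finset.mem_biUnion.2 ⟨j, hj, hx'⟩)
  rcases hb with h | h
  · exact Or.inl (key_lemma φ d k x true hT (by simpa using h) hvx)
  · exact Or.inr (key_lemma φ d k x false hT (by simpa using h) hvx)
end

section
/- Obstruction-trees can be lifted: for all integers i,d,k with d ≤ i and d ≤ k, every incidence graph G in 𝒞_d, every literal x_⋆ of G, and H := G[x_⋆], if T is an (i,d,k)-obstruction-tree of H, then T is also an (i,d,k)-obstruction-tree of G, and N†_G(T) = N†_H(T). -/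
-- Auxiliary lemmas for `obsTree_lift`.

lemma assign_ids_subset (φ : CNF) (x : Var) (b : Bool) :
    (φ.assign x b).ids ⊆ φ.ids := Finset.filter_subset _ _

lemma assign_cvars (φ : CNF) (x : Var) (b : Bool) (i : ℕ) :
    (φ.assign x b).cvars i = (φ.cvars i).erase x := by
  simp [CNF.cvars, CNF.assign, Finset.erase_union_distrib]

lemma incGraph_assign_le (φ : CNF) (x : Var) (b : Bool) :
    ∀ u v, ((φ.assign x b).incGraph).Adj u v → (φ.incGraph).Adj u v := by
  rintro (y | j) (z | m) h
  · exact h.elim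
  · exact ⟨assign_ids_subset φ x b h.1,
      Finset.mem_of_mem_erase (by rw [← assign_cvars]; exact h.2)⟩
  · exact ⟨assign_ids_subset φ x b h.1,
      Finset.mem_of_mem_erase (by rw [← assign_cvars]; exact h.2)⟩
  · exact h.elim

lemma adj_inr_ids {φ : CNF} {j : ℕ} {w : Var ⊕ ℕ}
    (h : (φ.incGraph).Adj (Sum.inr j) w) : j ∈ φ.ids := by
  cases w with
  | inl y => exact h.1
  | inr m => exact h.elim

lemma path_clause_mem (H : CNF) :
    ∀ (P : List (Var ⊕ ℕ)), P.Chain' (H.incGraph).Adj →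
    ∀ (hne : P ≠ []), (∀ j, P.getLast hne = Sum.inr j → j ∈ H.ids) →
    ∀ j, Sum.inr j ∈ P → j ∈ H.ids := by
  intro P
  induction P with
  | nil => intro _ hne; exact absurd rfl hne
  | cons a l ih =>
    intro hc hne hlast j hj
    cases l with
    | nil =>
      rcases List.mem_singleton.mp hj with rfl
      exact hlast j (by simp [List.getLast])
    | cons b' l' =>
      have hadj : (H.incGraph).Adj a b' := (List.isChain_cons_cons.mp hc).1
      rcases List.mem_cons.mp hj with rfl | hj'
      · exact adj_inr_ids hadj
      · exact ih (List.isChain_cons_cons.mp hc).2 (by simp)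
          (fun j' hj' => hlast j' (by rwa [List.getLast_cons (by simp)])) j hj'

lemma mem_claSet {φ : CNF} {T : ObsTree} {j : ℕ} :
    j ∈ T.claSet φ ↔ Sum.inr j ∈ T.elts φ := by
  simp only [ObsTree.claSet, Finset.mem_biUnion]
  constructor
  · rintro ⟨(y | m), hv, hj⟩
    · simp at hj
    · simp at hj; subst hj; exact hv
  · intro h; exact ⟨Sum.inr j, h, by simp⟩

lemma biUnion_inter_assign (φ : CNF) (x : Var) (b : Bool) (S : Finset ℕ)
    (hS : ∀ j ∈ S, j ∈ (φ.assign x b).ids) :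
    S.biUnion φ.pos ∩ S.biUnion φ.neg =
    S.biUnion (φ.assign x b).pos ∩ S.biUnion (φ.assign x b).neg := by
  have hfilter : ∀ j ∈ S, x ∉ (if b then φ.pos j else φ.neg j) := by
    intro j hj
    exact (Finset.mem_filter.mp (hS j hj)).2
  ext y
  simp only [Finset.mem_inter, Finset.mem_biUnion, CNF.assign, Finset.mem_erase]
  constructor
  · rintro ⟨⟨j₁, hj₁, hp⟩, ⟨j₂, hj₂, hn⟩⟩
    have hyx : y ≠ x := by
      rintro rfl
      cases b with
      | true => exact hfilter j₁ hj₁ (by simpa using hp)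
      | false => exact hfilter j₂ hj₂ (by simpa using hn)
    exact ⟨⟨j₁, hj₁, hyx, hp⟩, ⟨j₂, hj₂, hyx, hn⟩⟩
  · rintro ⟨⟨j₁, hj₁, _, hp⟩, ⟨j₂, hj₂, _, hn⟩⟩
    exact ⟨⟨j₁, hj₁, hp⟩, ⟨j₂, hj₂, hn⟩⟩

/-- obstruction-trees can be lifted: for `d ≤ i` and `d ≤ k`,
if `T` is an `(i,d,k)`-obstruction-tree of `H := φ[x := b]` for a literal of
`φ ∈ 𝒞_d`, then `T` is also an `(i,d,k)`-obstruction-tree of `φ` with the same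
destroy-neighborhood. -/
theorem obsTree_lift (i d k : ℕ) (hdi : d ≤ i) (hdk : d ≤ k)
    (φ : CNF) (hφ : φ.InC d) (x : Var) (b : Bool) (hx : x ∈ φ.vars)
    (T : ObsTree) (hT : IsObsTree (φ.assign x b) d k i T) :
    IsObsTree φ d k i T ∧ T.nd φ = T.nd (φ.assign x b) := by
  suffices h : IsObsTree φ d k i T ∧ T.elts φ = T.elts (φ.assign x b) ∧
      T.nd φ = T.nd (φ.assign x b) ∧
      (∀ j, Sum.inr j ∈ T.elts (φ.assign x b) → j ∈ (φ.assign x b).ids) from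
    ⟨h.1, h.2.2.1⟩
  clear hdi hdk hx
  set H := φ.assign x b with hH
  induction hT with
  | base j hj hcard =>
    have hjφ : j ∈ φ.ids := assign_ids_subset φ x b hj
    have hsub : H.cvars j ⊆ φ.cvars j := by
      rw [hH, assign_cvars]; exact Finset.erase_subset _ _
    have hcv : φ.cvars j = H.cvars j :=
      (Finset.eq_of_subset_of_card_le hsub (by rw [hcard]; exact hφ j hjφ)).symm
    refine ⟨.base j hjφ (by rw [hcv, hcard]), ?_, ?_, ?_⟩
    · simp [ObsTree.elts, hcv]
    · simp [ObsTree.nd, hcv]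
    · intro m hm
      simp only [ObsTree.elts, Finset.mem_insert, Finset.mem_image] at hm
      rcases hm with hm | ⟨y, _, hy⟩
      · rw [Sum.inr.injEq] at hm; subst hm; exact hj
      · exact absurd hy (by simp)
  | node i' T₁ T₂ P h₁ h₂ hdisj hchain hnodup hne hhead hlast hlen ih₁ ih₂ =>
    obtain ⟨hT₁, he₁, hn₁, hc₁⟩ := ih₁
    obtain ⟨hT₂, he₂, hn₂, hc₂⟩ := ih₂
    have helts : (ObsTree.node T₁ T₂ P).elts φ = (ObsTree.node T₁ T₂ P).elts H := by
      simp [ObsTree.elts, he₁, he₂]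
    have hclmem : ∀ j, Sum.inr j ∈ (ObsTree.node T₁ T₂ P).elts H → j ∈ H.ids := by
      intro j hj
      simp only [ObsTree.elts, Finset.mem_union, List.mem_toFinset] at hj
      rcases hj with (hj | hj) | hj
      · exact hc₁ j hj
      · exact hc₂ j hj
      · refine path_clause_mem H P hchain hne ?_ j hj
        intro j' hj'
        exact hc₂ j' (by rw [← hj']; exact hlast)
    refine ⟨?_, helts, ?_, hclmem⟩
    · exact .node i' T₁ T₂ P hT₁ hT₂ (by rw [hn₁, hn₂]; exact hdisj)
        (hchain.imp (incGraph_assign_le φ x b)) hnodup hne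
        (by rw [he₁]; exact hhead) (by rw [he₂]; exact hlast) hlen
    · have hvar : (ObsTree.node T₁ T₂ P).varSet φ = (ObsTree.node T₁ T₂ P).varSet H := by
        simp [ObsTree.varSet, helts]
      have hcla : (ObsTree.node T₁ T₂ P).claSet φ = (ObsTree.node T₁ T₂ P).claSet H := by
        simp [ObsTree.claSet, helts]
      have hSmem : ∀ j ∈ (ObsTree.node T₁ T₂ P).claSet H, j ∈ H.ids := by
        intro j hj
        exact hclmem j (mem_claSet.mp hj)
      simp only [ObsTree.nd, hvar, hcla]
      rw [hH, biUnion_inter_assign φ x b _ (by rw [← hH]; exact hSmem)]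
end
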